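/- For every edge s → s' of G with s' ∈ S, the Soft Q-Learning residual equals α times the Detailed Balance residual: Q(s, s') − (r(s, s') + V_Q(s')) = α [log(F(s) P_F(s'|s)) − log(F(s') P_B(s|s'))], where F(s) = Σ_{s'' ∈ Ch(s)} exp(Q(s, s'')/α) and P_F(s'|s) = exp(Q(s, s')/α)/F(s). -/
import Mathlib


/-- The flow induced by a soft Q-function:
`F(s) = Σ_{s'' ∈ Ch(s)} exp(Q(s,s'')/α)`. -/
noncomputable def Fq {V : Type*} [Fintype V] (E : V → V → Prop) [DecidableRel E]
    (α : ℝ) (Q : V → V → ℝ) (s : V) : ℝ :=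
  ∑ t ∈ Finset.univ.filter (fun t => E s t), Real.exp (Q s t / α)

/-- The policy induced by a soft Q-function:
`P_F(s'|s) = exp(Q(s,s')/α) / F(s)`. -/
noncomputable def PFq {V : Type*} [Fintype V] (E : V → V → Prop) [DecidableRel E]
    (α : ℝ) (Q : V → V → ℝ) (s s' : V) : ℝ :=
  Real.exp (Q s s' / α) / Fq E α Q s

/-- The soft value function induced by a soft Q-function:
`V_Q(s) = α log Σ_{s'' ∈ Ch(s)} exp(Q(s,s'')/α)` for `s ∈ S`, and `V_Q(s_f) = 0`. -/
noncomputable def VQ {V : Type*} [Fintype V] [DecidableEq V]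
    (E : V → V → Prop) [DecidableRel E] (sf : V) (α : ℝ) (Q : V → V → ℝ) (s : V) : ℝ :=
  if s = sf then 0 else α * Real.log (Fq E α Q s)

/-- On a soft MDP with the sparse corrected reward, for every edge
`s → s'` with `s' ∈ S`, the SQL residual equals `α` times the DB residual, under the
correspondence `F(s) = Σ_{s''} exp(Q(s,s'')/α)`, `P_F(s'|s) = exp(Q(s,s')/α)/F(s)`. -/
theorem sql_residual_eq_db_residual
    {V : Type*} [Fintype V] [DecidableEq V]
    (E : V → V → Prop) [DecidableRel E] (s0 sf : V)
    (hacyc : ∀ v : V, ¬ Relation.TransGen E v v)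
    (hsink : ∀ v : V, ¬ E sf v)
    (hreach : ∀ v : V, Relation.ReflTransGen E s0 v)
    -- every non-terminal state has at least one child (all trajectories end at s_f)
    (hchild : ∀ s : V, s ≠ sf → ∃ t : V, E s t)
    (α : ℝ) (hα : 0 < α)
    (En : V → ℝ)
    (PB : V → V → ℝ)
    (hPBpos : ∀ s s' : V, E s s' → s' ≠ sf → 0 < PB s s')
    (hPBsum : ∀ s' : V, s' ≠ sf → s' ≠ s0 →
      ∑ s ∈ Finset.univ.filter (fun s => E s s'), PB s s' = 1)
    -- sparse corrected reward
    (r : V → V → ℝ)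
    (hr : ∀ s s' : V, E s s' → s' ≠ sf → r s s' = α * Real.log (PB s s'))
    (hrf : ∀ x : V, E x sf → r x sf = -En x)
    (Q : V → V → ℝ) :
    ∀ s s' : V, E s s' → s' ≠ sf →
      Q s s' - (r s s' + VQ E sf α Q s')
        = α * (Real.log (Fq E α Q s * PFq E α Q s s')
            - Real.log (Fq E α Q s' * PB s s')) := by
  intro s s' hE hne
  have hFqpos : ∀ u : V, (∃ t, E u t) → 0 < Fq E α Q u := by
    intro u ⟨t, ht⟩
    apply Finset.sum_pos (fun i _ => Real.exp_pos _)
    exact ⟨t, Finset.mem_filter.mpr ⟨Finset.mem_univ t, ht⟩⟩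
  have hFs : 0 < Fq E α Q s := hFqpos s ⟨s', hE⟩
  have hFs' : 0 < Fq E α Q s' := hFqpos s' (hchild s' hne)
  have hPF : Fq E α Q s * PFq E α Q s s' = Real.exp (Q s s' / α) := by
    unfold PFq; field_simp
  rw [hPF, Real.log_exp, VQ, if_neg hne, hr s s' hE hne,
    Real.log_mul (ne_of_gt hFs') (ne_of_gt (hPBpos s s' hE hne))]
  field_simp
  ring
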